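/- Let n ≥ 3 and let a : Fin n → Fin n → Fin n → Fin n → ℝ satisfy a i j k l = a j i k l = a i j l k, the cyclic identity a i j k l + a i l j k + a i k j l = 0, and Lorentz invariance as a rank-4 tensor. Then there exists λ ∈ ℝ such that a i i j j = λ · ε i · ε j for all i ≠ j. -/

import Mathlib

open Matrix

noncomputable section

namespace GeomActions

/-- Signature function: `ε 0 = −1`, `ε i = 1` for `i ≠ 0`. -/
def eps (n : ℕ) (i : Fin n) : ℝ := if (i : ℕ) = 0 then -1 else 1

/-- The Minkowski form `η = diag(−1, 1, …, 1)` of signature `(1, n−1)`. -/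
def etaMat (n : ℕ) : Matrix (Fin n) (Fin n) ℝ := Matrix.diagonal (eps n)

/-- The space of (components of) 2-jets of metrics: triples `(w₂, w₃, w₄)` encoding
`(g_{ij}, g_{ij,k}, g_{ij,kl})` at a point in a chart. -/
abbrev W (n : ℕ) :=
  (Fin n → Fin n → ℝ) × (Fin n → Fin n → Fin n → ℝ) × (Fin n → Fin n → Fin n → Fin n → ℝ)

/-- An admissible parameter triple `(J, S, C)` for a coordinate change:
`J` invertible, `S` symmetric in its last two indices, `C` symmetric in its last three. -/
structure Admissible (n : ℕ) (J : Matrix (Fin n) (Fin n) ℝ)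
    (S : Fin n → Fin n → Fin n → ℝ) (C : Fin n → Fin n → Fin n → Fin n → ℝ) : Prop where
  hJ : IsUnit J
  hS : ∀ a i k, S a i k = S a k i
  hC1 : ∀ a i k l, C a i k l = C a k i l
  hC2 : ∀ a i k l, C a i k l = C a i l k

/-- Transformation rule `Φ_{J,S,C}` for the 2-jet of a metric under a coordinate change. -/
def Phi (n : ℕ) (J : Matrix (Fin n) (Fin n) ℝ) (S : Fin n → Fin n → Fin n → ℝ)
    (C : Fin n → Fin n → Fin n → Fin n → ℝ) (w : W n) : W n :=
  ⟨fun i j => ∑ a, ∑ b, J a i * J b j * w.1 a b,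
   fun i j k =>
     (∑ a, ∑ b, ∑ c, J a i * J b j * J c k * w.2.1 a b c) +
       ∑ a, ∑ b, (S a i k * J b j + J a i * S b j k) * w.1 a b,
   fun i j k l =>
     (∑ a, ∑ b, ∑ c, ∑ d, J a i * J b j * J c k * J d l * w.2.2 a b c d) +
     (∑ a, ∑ b, ∑ c,
       (S a i l * J b j * J c k + J a i * S b j l * J c k + J a i * J b j * S c k l +
         J c l * S a i k * J b j + J c l * J a i * S b j k) * w.2.1 a b c) +
     ∑ a, ∑ b,
       (S a i k * S b j l + S a i l * S b j k + C a i k l * J b j + J a i * C b j k l) * w.1 a b⟩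

/-- `w ∈ W n` is a metric 2-jet: `w₂` symmetric and congruent to `η`, and `w₃`, `w₄`
have the symmetries of derivatives of a metric. -/
def MetricJet (n : ℕ) (w : W n) : Prop :=
  (∀ i j, w.1 i j = w.1 j i) ∧
  (∃ P : Matrix (Fin n) (Fin n) ℝ, IsUnit P ∧ Pᵀ * Matrix.of w.1 * P = etaMat n) ∧
  (∀ i j k, w.2.1 i j k = w.2.1 j i k) ∧
  (∀ i j k l, w.2.2 i j k l = w.2.2 j i k l ∧ w.2.2 i j k l = w.2.2 i j l k)

/-- The symmetries `w i j k l = w j i k l = w i j l k` of the second-derivative variables. -/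
def SymW4 (n : ℕ) (w : Fin n → Fin n → Fin n → Fin n → ℝ) : Prop :=
  ∀ i j k l, w i j k l = w j i k l ∧ w i j k l = w i j l k

/-- Symmetry under all permutations of the last three arguments. -/
def Sym3Last (n : ℕ) (c : Fin n → Fin n → Fin n → Fin n → ℝ) : Prop :=
  ∀ i j k l, c i j k l = c i k j l ∧ c i j k l = c i j l k

/-- The scalar curvature at a point, in Lorentz normal coordinates where
`g_{ij} = η i j`, `g_{ij,k} = 0`, `g_{ij,kl} = w4 i j k l`. -/
def Rform (n : ℕ) (w4 : Fin n → Fin n → Fin n → Fin n → ℝ) : ℝ :=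
  ∑ i, ∑ j, eps n i * eps n j * (w4 i j i j - w4 i i j j)

/-- The contravariant Ricci tensor at a point, in Lorentz normal coordinates. -/
def Ricform (n : ℕ) (w4 : Fin n → Fin n → Fin n → Fin n → ℝ) (i j : Fin n) : ℝ :=
  (1 / 2) * eps n i * eps n j *
    ∑ k, eps n k * (w4 i k j k + w4 j k i k - w4 i j k k - w4 k k i j)

/-- The space of 2-jets of a metric together with 1-jets `(D_I, D_{I,j})` of a
type-(0,m) tensor field. -/
abbrev Y (n m : ℕ) :=
  W n × ((Fin m → Fin n) → ℝ) × ((Fin m → Fin n) → Fin n → ℝ)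

/-- Transformation rule `Ψ_{J,S,C}` for the pair (metric 2-jet, matter field 1-jet). -/
def Psi (n m : ℕ) (J : Matrix (Fin n) (Fin n) ℝ) (S : Fin n → Fin n → Fin n → ℝ)
    (C : Fin n → Fin n → Fin n → Fin n → ℝ) (p : Y n m) : Y n m :=
  ⟨Phi n J S C p.1,
   fun I => ∑ A : Fin m → Fin n, (∏ r, J (A r) (I r)) * p.2.1 A,
   fun I j =>
     (∑ A : Fin m → Fin n, ∑ b, (∏ r, J (A r) (I r)) * J b j * p.2.2 A b) +
     ∑ r : Fin m, ∑ A : Fin m → Fin n,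
       S (A r) (I r) j * (∏ s ∈ Finset.univ.erase r, J (A s) (I s)) * p.2.1 A⟩

/-- The full antisymmetrisation `Alt y′` of the rank-(m+1) tensor
`z I = y′ (I ∘ castSucc) (I (last m))` determined by the derivative variables `y′`. -/
def altD (n m : ℕ) (y' : (Fin m → Fin n) → Fin n → ℝ) (I : Fin (m + 1) → Fin n) : ℝ :=
  (1 / (Nat.factorial (m + 1) : ℝ)) *
    ∑ σ : Equiv.Perm (Fin (m + 1)),
      ((Equiv.Perm.sign σ : ℤ) : ℝ) *
        y' (fun r => I (σ (Fin.castSucc r))) (I (σ (Fin.last m)))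

/-- Lorentz matrices: `Aᵀ * η * A = η`. -/
def IsLorentz (n : ℕ) (A : Matrix (Fin n) (Fin n) ℝ) : Prop :=
  Aᵀ * etaMat n * A = etaMat n

/-- Lorentz invariance of a rank-2 tensor. -/
def LorentzInv2 (n : ℕ) (b : Fin n → Fin n → ℝ) : Prop :=
  ∀ A : Matrix (Fin n) (Fin n) ℝ, IsLorentz n A →
    ∀ i j, b i j = ∑ p, ∑ q, A i p * A j q * b p q

/-- Lorentz invariance of a rank-4 tensor. -/
def LorentzInv4 (n : ℕ) (a : Fin n → Fin n → Fin n → Fin n → ℝ) : Prop :=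
  ∀ A : Matrix (Fin n) (Fin n) ℝ, IsLorentz n A →
    ∀ i j k l, a i j k l = ∑ p, ∑ q, ∑ r, ∑ s, A i p * A j q * A k r * A l s * a p q r s

/-- Lorentz invariance of a rank-6 tensor. -/
def LorentzInv6 (n : ℕ) (a : Fin n → Fin n → Fin n → Fin n → Fin n → Fin n → ℝ) : Prop :=
  ∀ A : Matrix (Fin n) (Fin n) ℝ, IsLorentz n A →
    ∀ i j k l m p, a i j k l m p =
      ∑ a₁, ∑ a₂, ∑ a₃, ∑ a₄, ∑ a₅, ∑ a₆,
        A i a₁ * A j a₂ * A k a₃ * A l a₄ * A m a₅ * A p a₆ * a a₁ a₂ a₃ a₄ a₅ a₆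

/-- Lorentz invariance of a rank-k tensor indexed by `Fin k → Fin n`. -/
def LorentzInvT (n k : ℕ) (T : (Fin k → Fin n) → ℝ) : Prop :=
  ∀ A : Matrix (Fin n) (Fin n) ℝ, IsLorentz n A →
    ∀ I : Fin k → Fin n, T I = ∑ J : Fin k → Fin n, (∏ r, A (I r) (J r)) * T J

/-- Number of occurrences of `v` among `(i, j, k, l)`. -/
def cnt4 (n : ℕ) (i j k l v : Fin n) : ℕ :=
  (if i = v then 1 else 0) + (if j = v then 1 else 0) + (if k = v then 1 else 0) +
    (if l = v then 1 else 0)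

/-- Coordinate direction in the `w₂`-variables. -/
def e2 (n : ℕ) (i j : Fin n) : W n :=
  ⟨fun a b => if a = i ∧ b = j then 1 else 0, 0, 0⟩

/-- Coordinate direction in the `w₃`-variables. -/
def e3 (n : ℕ) (i j k : Fin n) : W n :=
  ⟨0, fun a b c => if a = i ∧ b = j ∧ c = k then 1 else 0, 0⟩

/-- Coordinate direction in the `w₄`-variables. -/
def e4 (n : ℕ) (i j k l : Fin n) : W n :=
  ⟨0, 0, fun a b c d => if a = i ∧ b = j ∧ c = k ∧ d = l then 1 else 0⟩

/-- Coordinate direction in the `y′`-variables. -/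
def eY' (n m : ℕ) (I : Fin m → Fin n) (j : Fin n) : Y n m :=
  ⟨0, 0, fun A b => if A = I ∧ b = j then 1 else 0⟩


section AuxStatement11

variable {n : ℕ}

lemma fin_val_zero_iff {n : ℕ} [NeZero n] (x : Fin n) : (x : ℕ) = 0 ↔ x = 0 := by
  rw [← Fin.val_zero n, Fin.val_inj]

lemma sum_reform4 (A : Matrix (Fin n) (Fin n) ℝ) (a : Fin n → Fin n → Fin n → Fin n → ℝ)
    (i j k l : Fin n) :
    (∑ p, ∑ q, ∑ r, ∑ s, A i p * A j q * A k r * A l s * a p q r s)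
      = ∑ p, A i p * (∑ q, A j q * (∑ r, A k r * (∑ s, A l s * a p q r s))) := by
  simp only [Finset.mul_sum, mul_assoc]

/-- Permutation matrix. -/
def permM (n : ℕ) (σ : Equiv.Perm (Fin n)) : Matrix (Fin n) (Fin n) ℝ :=
  fun i j => if σ i = j then 1 else 0

lemma permM_row (σ : Equiv.Perm (Fin n)) (m : Fin n) (g : Fin n → ℝ) :
    ∑ p, permM n σ m p * g p = g (σ m) := by
  simp [permM]

lemma permM_lorentz [NeZero n] (σ : Equiv.Perm (Fin n)) (h0 : σ 0 = 0) :
    IsLorentz n (permM n σ) := by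
  have hs0 : σ.symm 0 = 0 := by
    conv_lhs => rw [← h0]
    exact σ.symm_apply_apply 0
  have heps : ∀ x, eps n (σ.symm x) = eps n x := by
    intro x
    have hiff : σ.symm x = 0 ↔ x = 0 := by
      constructor
      · intro h
        have := congrArg σ h
        rwa [σ.apply_symm_apply, h0] at this
      · intro h; rw [h, hs0]
    simp only [eps, fin_val_zero_iff, hiff]
  ext i j
  have hentry : ((permM n σ)ᵀ * etaMat n * permM n σ) i j
      = ∑ p, permM n σ p i * (eps n p * permM n σ p j) := by
    rw [Matrix.mul_assoc, Matrix.mul_apply]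
    refine Finset.sum_congr rfl fun p _ => ?_
    rw [Matrix.transpose_apply, etaMat, Matrix.diagonal_mul]
  rw [hentry, ← Equiv.sum_comp σ.symm (fun p => permM n σ p i * (eps n p * permM n σ p j))]
  simp only [permM, Equiv.apply_symm_apply]
  rcases eq_or_ne i j with h | h
  · subst h
    simp [etaMat, Matrix.diagonal_apply_eq, heps]
  · simp [etaMat, Matrix.diagonal_apply_ne _ h, h, heps]
    intro hij; exact absurd hij.symm h

lemma perm_inv4 [NeZero n] (a : Fin n → Fin n → Fin n → Fin n → ℝ)
    (hlor : LorentzInv4 n a) (σ : Equiv.Perm (Fin n)) (h0 : σ 0 = 0) (i j k l : Fin n) :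
    a i j k l = a (σ i) (σ j) (σ k) (σ l) := by
  have h := hlor (permM n σ) (permM_lorentz σ h0) i j k l
  rw [sum_reform4] at h
  simpa only [permM_row] using h

/-- Boost matrix in the (0, kk) plane. -/
def boostM (n : ℕ) [NeZero n] (kk : Fin n) (c s : ℝ) : Matrix (Fin n) (Fin n) ℝ :=
  fun p q =>
    if p = 0 ∧ q = 0 then c else if p = 0 ∧ q = kk then s
    else if p = kk ∧ q = 0 then s else if p = kk ∧ q = kk then c
    else if p = q then 1 else 0

variable [NeZero n] {kk : Fin n} {c s : ℝ}

lemma boostM_symm (p q : Fin n) : boostM n kk c s p q = boostM n kk c s q p := by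
  unfold boostM
  by_cases h1 : p = 0 <;> by_cases h2 : q = 0 <;> by_cases h3 : p = kk <;>
    by_cases h4 : q = kk <;> simp_all [eq_comm]

lemma boost_row0 (hk : kk ≠ 0) (g : Fin n → ℝ) :
    ∑ p, boostM n kk c s 0 p * g p = c * g 0 + s * g kk := by
  have h : ∀ p, boostM n kk c s 0 p * g p
      = (if p = 0 then c * g p else 0) + (if p = kk then s * g p else 0) := by
    intro p
    unfold boostM
    by_cases h1 : p = 0 <;> by_cases h2 : p = kk <;> simp_all [eq_comm]
  rw [Finset.sum_congr rfl fun p _ => h p, Finset.sum_add_distrib]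
  simp

lemma boost_rowk (hk : kk ≠ 0) (g : Fin n → ℝ) :
    ∑ p, boostM n kk c s kk p * g p = s * g 0 + c * g kk := by
  have h : ∀ p, boostM n kk c s kk p * g p
      = (if p = 0 then s * g p else 0) + (if p = kk then c * g p else 0) := by
    intro p
    unfold boostM
    by_cases h1 : p = 0 <;> by_cases h2 : p = kk <;> simp_all [eq_comm]
  rw [Finset.sum_congr rfl fun p _ => h p, Finset.sum_add_distrib]
  simp

lemma boost_rowd {m : Fin n} (hm0 : m ≠ 0) (hmk : m ≠ kk) (g : Fin n → ℝ) :
    ∑ p, boostM n kk c s m p * g p = g m := by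
  have h : ∀ p, boostM n kk c s m p * g p = (if m = p then 1 else 0) * g p := by
    intro p
    unfold boostM
    by_cases h1 : p = 0 <;> by_cases h2 : p = kk <;> simp_all
  rw [Finset.sum_congr rfl fun p _ => h p]
  simp

lemma boost_lorentz (hk : kk ≠ 0) (hcs : c * c - s * s = 1) :
    IsLorentz n (boostM n kk c s) := by
  have e0 : eps n (0 : Fin n) = -1 := by simp [eps]
  have ek : eps n kk = 1 := by simp [eps, fin_val_zero_iff, hk]
  have B00 : boostM n kk c s 0 0 = c := by simp [boostM]
  have B0k : boostM n kk c s 0 kk = s := by simp [boostM, hk]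
  have Bk0 : boostM n kk c s kk 0 = s := by simp [boostM, hk]
  have Bkk : boostM n kk c s kk kk = c := by simp [boostM, hk]
  have eta00 : etaMat n 0 0 = eps n 0 := Matrix.diagonal_apply_eq _ _
  have etakk : etaMat n kk kk = eps n kk := Matrix.diagonal_apply_eq _ _
  ext i j
  have hentry : ((boostM n kk c s)ᵀ * etaMat n * boostM n kk c s) i j
      = ∑ p, boostM n kk c s i p * (eps n p * boostM n kk c s j p) := by
    rw [Matrix.mul_assoc, Matrix.mul_apply]
    refine Finset.sum_congr rfl fun p _ => ?_
    rw [Matrix.transpose_apply, etaMat, Matrix.diagonal_mul, boostM_symm p i, boostM_symm p j]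
  rw [hentry]
  by_cases hi0 : i = 0
  · subst hi0
    rw [boost_row0 hk]
    by_cases hj0 : j = 0
    · subst hj0
      rw [B00, B0k, e0, ek, eta00, e0]
      linear_combination -hcs
    · by_cases hjk : j = kk
      · rw [hjk, Bk0, Bkk, e0, ek,
          show etaMat n 0 kk = 0 from Matrix.diagonal_apply_ne _ (Ne.symm hk)]
        ring
      · have Bj0 : boostM n kk c s j 0 = 0 := by simp [boostM, hj0, hjk]
        have Bjk : boostM n kk c s j kk = 0 := by simp [boostM, hj0, hjk]
        rw [Bj0, Bjk, show etaMat n 0 j = 0 from Matrix.diagonal_apply_ne _ (Ne.symm hj0)]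
        ring
  · by_cases hik : i = kk
    · rw [hik, boost_rowk hk]
      by_cases hj0 : j = 0
      · subst hj0
        rw [B00, B0k, e0, ek, show etaMat n kk 0 = 0 from Matrix.diagonal_apply_ne _ hk]
        ring
      · by_cases hjk : j = kk
        · rw [hjk, Bk0, Bkk, e0, ek, etakk, ek]
          linear_combination hcs
        · have Bj0 : boostM n kk c s j 0 = 0 := by simp [boostM, hj0, hjk]
          have Bjk : boostM n kk c s j kk = 0 := by simp [boostM, hj0, hjk]
          rw [Bj0, Bjk, show etaMat n kk j = 0 from Matrix.diagonal_apply_ne _ (fun h => hjk h.symm)]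
          ring
    · rw [boost_rowd hi0 hik]
      by_cases hji : j = i
      · rw [hji, show boostM n kk c s i i = 1 from by simp [boostM, hi0, hik],
          show etaMat n i i = eps n i from Matrix.diagonal_apply_eq _ _]
        ring
      · rw [show boostM n kk c s j i = 0 from by simp [boostM, hi0, hik, hji],
          show etaMat n i j = 0 from Matrix.diagonal_apply_ne _ (fun h => hji h.symm)]
        ring

lemma boost1 (a : Fin n → Fin n → Fin n → Fin n → ℝ) (hlor : LorentzInv4 n a)
    (kk x y : Fin n) (hk : kk ≠ 0) (hx0 : x ≠ 0) (hxk : x ≠ kk) (hy0 : y ≠ 0) (hyk : y ≠ kk) :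
    a x y 0 0 = - a x y kk kk := by
  have hc : Real.sqrt 2 * Real.sqrt 2 = 2 := Real.mul_self_sqrt (by norm_num)
  have h1 := hlor (boostM n kk (Real.sqrt 2) 1)
    (boost_lorentz hk (by rw [hc]; norm_num)) x y 0 0
  have h2 := hlor (boostM n kk (Real.sqrt 2) (-1))
    (boost_lorentz hk (by rw [hc]; norm_num)) x y 0 0
  rw [sum_reform4] at h1 h2
  simp only [boost_row0 hk, boost_rowd hx0 hxk, boost_rowd hy0 hyk] at h1 h2
  linear_combination (-1/2 : ℝ) * h1 + (-1/2 : ℝ) * h2 - a x y 0 0 * hc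

lemma boost2 (a : Fin n → Fin n → Fin n → Fin n → ℝ) (hlor : LorentzInv4 n a)
    (kk x y : Fin n) (hk : kk ≠ 0) (hx0 : x ≠ 0) (hxk : x ≠ kk) (hy0 : y ≠ 0) (hyk : y ≠ kk) :
    a 0 0 x y = - a kk kk x y := by
  have hc : Real.sqrt 2 * Real.sqrt 2 = 2 := Real.mul_self_sqrt (by norm_num)
  have h1 := hlor (boostM n kk (Real.sqrt 2) 1)
    (boost_lorentz hk (by rw [hc]; norm_num)) 0 0 x y
  have h2 := hlor (boostM n kk (Real.sqrt 2) (-1))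
    (boost_lorentz hk (by rw [hc]; norm_num)) 0 0 x y
  rw [sum_reform4] at h1 h2
  simp only [boost_row0 hk, boost_rowd hx0 hxk, boost_rowd hy0 hyk] at h1 h2
  linear_combination (-1/2 : ℝ) * h1 + (-1/2 : ℝ) * h2 - a 0 0 x y * hc

end AuxStatement11

theorem statement11 (n : ℕ) (hn : 3 ≤ n) (a : Fin n → Fin n → Fin n → Fin n → ℝ)
    (hsym : ∀ i j k l, a i j k l = a j i k l ∧ a i j k l = a i j l k)
    (hcyc : ∀ i j k l, a i j k l + a i l j k + a i k j l = 0)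
    (hlor : LorentzInv4 n a) :
    ∃ lam : ℝ, ∀ i j, i ≠ j → a i i j j = lam * eps n i * eps n j := by
  haveI : NeZero n := ⟨by omega⟩
  set i1 : Fin n := ⟨1, by omega⟩ with hi1def
  set i2 : Fin n := ⟨2, by omega⟩ with hi2def
  have h10 : i1 ≠ 0 := by
    intro h
    have := congrArg Fin.val h
    rw [Fin.val_zero] at this
    simp [hi1def] at this
  have h20 : i2 ≠ 0 := by
    intro h
    have := congrArg Fin.val h
    rw [Fin.val_zero] at this
    simp [hi2def] at this
  have h12 : i1 ≠ i2 := by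
    intro h
    have := congrArg Fin.val h
    simp [hi1def, hi2def] at this
  -- all spatial diagonal values agree
  have hspat : ∀ x y : Fin n, x ≠ 0 → y ≠ 0 → x ≠ y → a x x y y = a i1 i1 i2 i2 := by
    intro x y hx hy hxy
    set τ : Equiv.Perm (Fin n) := Equiv.swap i1 x with hτdef
    have hτ0 : τ 0 = 0 := Equiv.swap_apply_of_ne_of_ne (Ne.symm h10) (Ne.symm hx)
    have hτ1 : τ i1 = x := Equiv.swap_apply_left _ _
    set b : Fin n := τ i2 with hbdef
    have hb0 : b ≠ 0 := by
      intro h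
      have : i2 = (0 : Fin n) := by
        have h2 := congrArg τ h
        rw [hbdef] at h
        have := τ.injective (h.trans hτ0.symm)
        exact this
      exact h20 this
    have hbx : b ≠ x := by
      intro h
      have : i2 = i1 := by
        have := τ.injective (show τ i2 = τ i1 by rw [hτ1, ← h, hbdef])
        exact this
      exact h12 this.symm
    set σ : Equiv.Perm (Fin n) := (Equiv.swap b y) * τ with hσdef
    have hσ0 : σ 0 = 0 := by
      rw [hσdef, Equiv.Perm.mul_apply, hτ0]
      exact Equiv.swap_apply_of_ne_of_ne (Ne.symm hb0) (Ne.symm hy)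
    have hσ1 : σ i1 = x := by
      rw [hσdef, Equiv.Perm.mul_apply, hτ1]
      exact Equiv.swap_apply_of_ne_of_ne (Ne.symm hbx) hxy
    have hσ2 : σ i2 = y := by
      rw [hσdef, Equiv.Perm.mul_apply, ← hbdef]
      exact Equiv.swap_apply_left _ _
    have h := perm_inv4 a hlor σ hσ0 i1 i1 i2 i2
    rw [hσ1, hσ2] at h
    exact h.symm
  refine ⟨a i1 i1 i2 i2, ?_⟩
  intro i j hij
  have e0 : eps n (0 : Fin n) = -1 := by simp [eps]
  by_cases hi : i = 0
  · subst hi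
    have hj : j ≠ 0 := fun h => hij h.symm
    have ej : eps n j = 1 := by simp [eps, fin_val_zero_iff, hj]
    set kk : Fin n := if j = i1 then i2 else i1 with hkkdef
    have hkk0 : kk ≠ 0 := by
      rw [hkkdef]; split <;> assumption
    have hkkj : j ≠ kk := by
      rw [hkkdef]; split
      · next h => rw [h]; exact h12
      · next h => exact h
    have h2 := boost2 a hlor kk j j hkk0 hj hkkj hj hkkj
    rw [h2, hspat kk j hkk0 hj (fun h => hkkj h.symm), e0, ej]
    ring
  · by_cases hj : j = 0
    · subst hj
      have ei : eps n i = 1 := by simp [eps, fin_val_zero_iff, hi]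
      set kk : Fin n := if i = i1 then i2 else i1 with hkkdef
      have hkk0 : kk ≠ 0 := by
        rw [hkkdef]; split <;> assumption
      have hkki : i ≠ kk := by
        rw [hkkdef]; split
        · next h => rw [h]; exact h12
        · next h => exact h
      have h1 := boost1 a hlor kk i i hkk0 hi hkki hi hkki
      rw [h1, hspat i kk hi hkk0 hkki, e0, ei]
      ring
    · have ei : eps n i = 1 := by simp [eps, fin_val_zero_iff, hi]
      have ej : eps n j = 1 := by simp [eps, fin_val_zero_iff, hj]
      rw [hspat i j hi hj hij, ei, ej]
      ring

end GeomActions
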